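/- Let μ > 0, σ > 0, γ > 0 with γ ≠ 1, and λ ∈ [0, μ). Suppose the discriminant D := (γ−1)(μ²−λ²)/(γσ⁴) − (1/2 − μ/σ²)² is strictly negative, set a = √(−D) and b = 1/2 − μ/σ² + (γ−1)(μ−λ)/(γσ²), and assume b/a > 1. Then the function w(y) = ( a·coth( arcoth(b/a) − a·y ) + (μ/σ² − 1/2) ) / (γ−1), where coth(x) = cosh(x)/sinh(x) and arcoth(x) = artanh(1/x) for |x| > 1, satisfies, for every y < arcoth(b/a)/a, the Riccati equation w'(y) + (1−γ)·w(y)² + (2μ/σ² − 1)·w(y) − (μ²−λ²)/(γσ⁴) = 0, together with the initial condition w(0) = (μ−λ)/(γσ²). -/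

import Mathlib

/-- Real hyperbolic cotangent. -/
noncomputable def coth (x : ℝ) : ℝ := Real.cosh x / Real.sinh x

/-- Real inverse hyperbolic tangent on (-1,1). -/
noncomputable def artanh (x : ℝ) : ℝ := (1 / 2) * Real.log ((1 + x) / (1 - x))

/-- Real inverse hyperbolic cotangent, `arcoth x = artanh (1/x)` for `|x| > 1`. -/
noncomputable def arcoth (x : ℝ) : ℝ := artanh (1 / x)

lemma coth_arcoth {t : ℝ} (ht : 1 < t) : coth (arcoth t) = t := by
  have ht0 : 0 < t := lt_trans one_pos ht
  have h1t : 1 / t < 1 := by rw [div_lt_one ht0]; exact ht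
  have h1t' : 0 < 1 / t := by positivity
  have h1 : (0:ℝ) < (1 + 1/t) / (1 - 1/t) := by
    apply div_pos <;> linarith
  set x := arcoth t with hx
  have hE : Real.exp (2 * x) = (1 + 1/t) / (1 - 1/t) := by
    rw [hx]; unfold arcoth artanh
    rw [show (2:ℝ) * ((1/2) * Real.log ((1 + 1/t) / (1 - 1/t))) =
      Real.log ((1 + 1/t) / (1 - 1/t)) by ring]
    exact Real.exp_log h1
  have hE2 : Real.exp x ^ 2 = (1 + 1/t) / (1 - 1/t) := by
    rw [← hE, ← Real.exp_nat_mul]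
    norm_num
  have hEpos : 0 < Real.exp x := Real.exp_pos x
  have key : Real.exp x ^ 2 * (1 - 1/t) * t = (1 + 1/t) * t := by
    rw [hE2]
    have hne : (1 - 1/t) ≠ 0 := by linarith
    field_simp
    exact div_self (sub_ne_zero.mpr ht.ne')
  have key' : Real.exp x ^ 2 * (t - 1) = t + 1 := by
    have ht' : t ≠ 0 := ht0.ne'
    field_simp at key
    linarith [key]
  have hE2gt : 1 < Real.exp x ^ 2 := by
    rw [hE2, lt_div_iff₀ (by linarith)]
    linarith
  have hne : Real.exp x * Real.exp x - 1 ≠ 0 := by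
    have : Real.exp x * Real.exp x = Real.exp x ^ 2 := (sq _).symm
    rw [this]
    intro h
    rw [sub_eq_zero] at h
    rw [h] at hE2gt
    exact lt_irrefl 1 hE2gt
  unfold coth
  rw [Real.cosh_eq, Real.sinh_eq, Real.exp_neg]
  rw [div_eq_iff (by
    intro h
    apply hne
    have h' : Real.exp x - (Real.exp x)⁻¹ = 0 := by
      field_simp at h
      linarith
    field_simp at h'
    nlinarith [h'])]
  have hinv : (Real.exp x)⁻¹ = 1 / Real.exp x := inv_eq_one_div _
  rw [hinv]
  field_simp
  nlinarith [key']

lemma arcoth_pos {t : ℝ} (ht : 1 < t) : 0 < arcoth t := by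
  have ht0 : 0 < t := lt_trans one_pos ht
  have h1t : 1/t < 1 := by rw [div_lt_one ht0]; exact ht
  have h1t' : 0 < 1/t := by positivity
  unfold arcoth artanh
  have : 1 < (1 + 1/t) / (1 - 1/t) := by
    rw [lt_div_iff₀ (by linarith)]; linarith
  have := Real.log_pos this
  linarith

lemma coth_hasDerivAt {x : ℝ} (hx : Real.sinh x ≠ 0) :
    HasDerivAt coth (1 - coth x ^ 2) x := by
  have h := (Real.hasDerivAt_cosh x).div (Real.hasDerivAt_sinh x) hx
  refine h.congr_deriv ?_
  unfold coth
  have hid := Real.cosh_sq_sub_sinh_sq x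
  field_simp

theorem riccati_coth_solution
    (μ σ γ lam : ℝ) (hμ : 0 < μ) (hσ : 0 < σ) (hγ : 0 < γ) (hγ1 : γ ≠ 1)
    (hlam : lam ∈ Set.Ico 0 μ)
    (hD : (γ - 1) * (μ ^ 2 - lam ^ 2) / (γ * σ ^ 4) - (1 / 2 - μ / σ ^ 2) ^ 2 < 0)
    (a b : ℝ)
    (ha : a = Real.sqrt
      (-((γ - 1) * (μ ^ 2 - lam ^ 2) / (γ * σ ^ 4) - (1 / 2 - μ / σ ^ 2) ^ 2)))
    (hb : b = 1 / 2 - μ / σ ^ 2 + (γ - 1) * (μ - lam) / (γ * σ ^ 2))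
    (hba : 1 < b / a)
    (w : ℝ → ℝ)
    (hw : w = fun y : ℝ =>
      (a * coth (arcoth (b / a) - a * y) + (μ / σ ^ 2 - 1 / 2)) / (γ - 1)) :
    (∀ y : ℝ, y < arcoth (b / a) / a →
      deriv w y + (1 - γ) * (w y) ^ 2 + (2 * μ / σ ^ 2 - 1) * w y
        - (μ ^ 2 - lam ^ 2) / (γ * σ ^ 4) = 0) ∧
    w 0 = (μ - lam) / (γ * σ ^ 2) := by
  have hapos : 0 < a := by
    rw [ha]; exact Real.sqrt_pos.mpr (by linarith)
  have ha2 : a ^ 2 = -((γ - 1) * (μ ^ 2 - lam ^ 2) / (γ * σ ^ 4)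
      - (1 / 2 - μ / σ ^ 2) ^ 2) := by
    rw [ha, Real.sq_sqrt (by linarith)]
  have hγ1' : γ - 1 ≠ 0 := sub_ne_zero.mpr hγ1
  have hσ' : σ ≠ 0 := ne_of_gt hσ
  have hγ' : γ ≠ 0 := ne_of_gt hγ
  have ha3 : a ^ 2 = (μ / σ ^ 2 - 1 / 2) ^ 2
      - (γ - 1) * ((μ ^ 2 - lam ^ 2) / (γ * σ ^ 4)) := by
    rw [ha2]; ring
  constructor
  · intro y hy
    set A := arcoth (b / a) with hA
    have hu : 0 < A - a * y := by
      rw [lt_div_iff₀ hapos] at hy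
      nlinarith
    have hsinh : Real.sinh (A - a * y) ≠ 0 := ne_of_gt (Real.sinh_pos_iff.mpr hu)
    have hinner : HasDerivAt (fun z : ℝ => A - a * z) (-a) y := by
      simpa using ((hasDerivAt_id y).const_mul a).const_sub A
    have hcoth := (coth_hasDerivAt hsinh).comp y hinner
    have hwD : HasDerivAt w
        (a * ((1 - coth (A - a * y) ^ 2) * (-a)) / (γ - 1)) y := by
      rw [hw]
      exact ((hcoth.const_mul a).add_const _).div_const _
    have h2m : 2 * μ / σ ^ 2 - 1 = 2 * (μ / σ ^ 2 - 1 / 2) := by ring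
    have key : ∀ m c C : ℝ, a ^ 2 = m ^ 2 - (γ - 1) * c →
        a * ((1 - C ^ 2) * (-a)) / (γ - 1)
          + (1 - γ) * ((a * C + m) / (γ - 1)) ^ 2
          + 2 * (m) * ((a * C + m) / (γ - 1)) - c = 0 := by
      intro m c C h
      field_simp
      linear_combination (-(γ - 1)) * h
    rw [hwD.deriv, hw, h2m]
    exact key _ _ _ ha3
  · rw [hw]
    simp only [mul_zero, sub_zero]
    rw [coth_arcoth hba, mul_div_cancel₀ _ (ne_of_gt hapos)]
    rw [hb]
    field_simp
    ring
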